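/- For all integers t ≥ 1 and m ≥ 2, the girth of the graph (T_{4t+2}; m) equals 4t+2. -/

import Mathlib

/-- `BT t` : bit strings of length at most `2t - 1` that do not have `0^t` as a prefix. -/
def BT (t : ℕ) : Type :=
  {l : List Bool // l.length ≤ 2 * t - 1 ∧ ¬ List.replicate t false <+: l}

/-- Vertex set of `(T_{4t+2}; m)` : the two pinned vertices `x* = Sum.inl true`,
`y* = Sum.inl false`, together with `{x, y} × B_t × ZMod m`, where the side `x` is
encoded by `true` and `y` by `false`. -/
def TVert (t m : ℕ) : Type := Bool ⊕ (Bool × BT t × ZMod m)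

/-- The edge relation of `(T_{4t+2}; m)`: the pinned vertex of each side is joined to the
root `(s, ε, i)` for every `i`; each vertex `(s, b, i)` is joined to its children
`(s, bc, i)`; and `(x, a, i)` is joined to `(y, a, i)` where `a = 0^{t-1}`. -/
def TRel (t m : ℕ) : TVert t m → TVert t m → Prop := fun a b =>
  (∃ (s : Bool) (l : BT t) (i : ZMod m),
      a = Sum.inl s ∧ b = Sum.inr (s, l, i) ∧ l.val = []) ∨
  (∃ (s : Bool) (l l' : BT t) (i : ZMod m) (c : Bool),
      a = Sum.inr (s, l, i) ∧ b = Sum.inr (s, l', i) ∧ l'.val = l.val ++ [c]) ∨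
  (∃ (l l' : BT t) (i : ZMod m),
      a = Sum.inr (true, l, i) ∧ b = Sum.inr (false, l', i) ∧
      l.val = List.replicate (t - 1) false ∧ l'.val = List.replicate (t - 1) false)

/-- The graph `(T_{4t+2}; m)`. -/
def Tgraph (t m : ℕ) : SimpleGraph (TVert t m) := SimpleGraph.fromRel (TRel t m)

open SimpleGraph Walk List

attribute [reducible] TVert

section General
variable {V : Type*} {G : SimpleGraph V}

lemma length_ge_of_level (φ : V → ℤ)
    (hφ : ∀ ⦃u v⦄, G.Adj u v → φ u = φ v + 1 ∨ φ v = φ u + 1) :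
    ∀ {u v : V} (p : G.Walk u v), |φ u - φ v| ≤ (p.length : ℤ) := by
  intro u v p
  induction p with
  | nil => simp
  | @cons u w v h q ih =>
    have h1 := hφ h
    have h2 : |φ u - φ w| ≤ 1 := by rcases h1 with h1 | h1 <;> rw [h1] <;> simp [abs_le]
    calc |φ u - φ v| ≤ |φ u - φ w| + |φ w - φ v| := abs_sub_le _ _ _
      _ ≤ 1 + q.length := by gcongr
      _ ≤ ((q.cons h).length : ℤ) := by push_cast [Walk.length_cons]; omega

lemma exists_last_edge {u v : V} (p : G.Walk u v) (hnil : ¬ p.Nil) :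
    ∃ c, G.Adj c v ∧ s(c, v) ∈ p.edges ∧ c ∈ p.support := by
  induction p with
  | nil => simp at hnil
  | @cons a b w hab q ih =>
    by_cases hq : q.Nil
    · cases q with
      | nil => exact ⟨a, hab, by simp, by simp⟩
      | cons _ _ => exact absurd hq Walk.not_nil_cons
    · obtain ⟨c, h1, h2, h3⟩ := ih hq
      exact ⟨c, h1, by simp [h2], by simp [h3]⟩

lemma no_cycle_of_height (h : V → ℤ)
    (hΔ : ∀ ⦃u v⦄, G.Adj u v → h u = h v + 1 ∨ h v = h u + 1)
    (huniq : ∀ ⦃v u w⦄, G.Adj v u → G.Adj v w → h u < h v → h w < h v → u = w) :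
    ∀ {v : V} (p : G.Walk v v), ¬ p.IsCycle := by
  intro v p hp
  classical
  obtain ⟨u, hu, hmax⟩ : ∃ u ∈ p.support, ∀ w ∈ p.support, h w ≤ h u := by
    cases harg : p.support.argmax h with
    | none => exact absurd (List.argmax_eq_none.mp harg) p.support_ne_nil
    | some u => exact ⟨u, List.argmax_mem harg, fun w hw => List.le_of_mem_argmax hw harg⟩
  obtain ⟨q, hq, hqsup⟩ : ∃ q : G.Walk u u, q.IsCycle ∧ ∀ w ∈ q.support, h w ≤ h u := by
    refine ⟨p.rotate u hu, hp.rotate hu, ?_⟩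
    intro w hw
    rcases List.mem_cons.mp (((p.rotate u hu)).support_eq_cons ▸ hw) with rfl | hw'
    · exact le_refl _
    · exact hmax w (p.mem_support_iff.mpr (Or.inr ((support_rotate p u hu).mem_iff.mp hw')))
  have h3' := hq.three_le_length
  cases q with
  | nil => simp at h3'
  | @cons _ b _ hadj r =>
    rw [Walk.cons_isCycle_iff] at hq
    obtain ⟨hrpath, hne⟩ := hq
    have h3 : 2 ≤ r.length := by
      have h4 : (Walk.cons hadj r).length = r.length + 1 := Walk.length_cons _ _
      rw [h4] at h3'
      omega
    obtain ⟨c, hadj2', hcedge, hcsup⟩ := exists_last_edge r (by rw [Walk.nil_iff_length_eq]; omega)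
    have hadj2 : G.Adj u c := hadj2'.symm
    have hbc : b ≠ c := by
      rintro rfl
      exact hne (by simpa [Sym2.eq_swap] using hcedge)
    have hbmem : b ∈ (Walk.cons hadj r).support := by simp
    have hcmem : c ∈ (Walk.cons hadj r).support := by simp [hcsup]
    exact hbc (huniq hadj hadj2
      (by rcases hΔ hadj with h1 | h1 <;> have := hqsup b hbmem <;> omega)
      (by rcases hΔ hadj2 with h1 | h1 <;> have := hqsup c hcmem <;> omega))
end General

namespace S9

def lead : List Bool → ℕ
  | [] => 0
  | c :: l => if c then 0 else lead l + 1

@[simp] lemma lead_nil : lead [] = 0 := rfl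
@[simp] lemma lead_cons_true (l : List Bool) : lead (true :: l) = 0 := rfl
@[simp] lemma lead_cons_false (l : List Bool) : lead (false :: l) = lead l + 1 := rfl

lemma lead_le_length : ∀ l : List Bool, lead l ≤ l.length
  | [] => le_refl _
  | c :: l => by
      cases c
      · have := lead_le_length l; simp; omega
      · simp

lemma replicate_prefix_iff : ∀ (n : ℕ) (l : List Bool),
    (List.replicate n false <+: l ↔ n ≤ lead l)
  | 0, l => by simp
  | n + 1, [] => by
      constructor
      · intro h; have := h.length_le; simp at this
      · intro h; simp at h
  | n + 1, c :: l => by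
      rw [List.replicate_succ, List.cons_prefix_cons]
      cases c
      · simp [replicate_prefix_iff n l]
      · simp

lemma lead_append (l l' : List Bool) :
    lead (l ++ l') = if lead l < l.length then lead l else l.length + lead l' := by
  induction l with
  | nil => simp
  | cons c l ih =>
    cases c
    · simp only [List.cons_append, lead_cons_false, ih, List.length_cons]
      by_cases h : lead l < l.length <;> simp [h] <;> omega
    · simp

@[simp] lemma lead_replicate (k : ℕ) : lead (List.replicate k false) = k := by
  induction k with
  | zero => simp
  | succ n ih => rw [List.replicate_succ]; simp [ih]

lemma eq_replicate_of_lead (l : List Bool) (h : l.length ≤ lead l) :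
    l = List.replicate l.length false := by
  have h2 := (replicate_prefix_iff l.length l).mpr h
  have h3 := h2.eq_of_length_le (by simp)
  exact h3.symm

end S9

namespace S9

variable {t m : ℕ}

lemma tadj {u v : TVert t m} :
    (Tgraph t m).Adj u v ↔ u ≠ v ∧ (TRel t m u v ∨ TRel t m v u) :=
  SimpleGraph.fromRel_adj _ _ _

lemma bt_lead_lt (ht : 1 ≤ t) (b : BT t) : lead b.1 < t := by
  have h := b.2.2
  rw [replicate_prefix_iff] at h
  omega

/-- height rooted at `x*`, for the graph with `y*` deleted -/
def hv (t m : ℕ) : TVert t m → ℤ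
  | Sum.inl _ => 0
  | Sum.inr (true, b, _) => 1 + (b.1.length : ℤ)
  | Sum.inr (false, b, _) =>
      2 * (t : ℤ) + (b.1.length : ℤ) - 2 * ((min (lead b.1) (t - 1) : ℕ) : ℤ)

@[simp] lemma hv_inl (s : Bool) : hv t m (Sum.inl s) = 0 := rfl
@[simp] lemma hv_x (b : BT t) (i : ZMod m) :
    hv t m (Sum.inr (true, b, i)) = 1 + (b.1.length : ℤ) := rfl
@[simp] lemma hv_y (b : BT t) (i : ZMod m) :
    hv t m (Sum.inr (false, b, i)) =
      2 * (t : ℤ) + (b.1.length : ℤ) - 2 * ((min (lead b.1) (t - 1) : ℕ) : ℤ) := rfl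

/-- level function on all of `Tgraph` -/
def pv (t m : ℕ) : TVert t m → ℤ
  | Sum.inl true => 0
  | Sum.inl false => 2 * (t : ℤ) + 1
  | Sum.inr (true, b, _) => 1 + (b.1.length : ℤ)
  | Sum.inr (false, b, _) => 2 * (t : ℤ) - (b.1.length : ℤ)

@[simp] lemma pv_xs : pv t m (Sum.inl true) = 0 := rfl
@[simp] lemma pv_ys : pv t m (Sum.inl false) = 2 * (t : ℤ) + 1 := rfl
@[simp] lemma pv_x (b : BT t) (i : ZMod m) :
    pv t m (Sum.inr (true, b, i)) = 1 + (b.1.length : ℤ) := rfl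
@[simp] lemma pv_y (b : BT t) (i : ZMod m) :
    pv t m (Sum.inr (false, b, i)) = 2 * (t : ℤ) - (b.1.length : ℤ) := rfl

lemma pv_step (ht : 1 ≤ t) :
    ∀ ⦃u v : TVert t m⦄, (Tgraph t m).Adj u v →
      pv t m u = pv t m v + 1 ∨ pv t m v = pv t m u + 1 := by
  have key : ∀ u v : TVert t m, TRel t m u v →
      pv t m u = pv t m v + 1 ∨ pv t m v = pv t m u + 1 := by
    intro u v hrel
    rcases hrel with ⟨s, l, i, rfl, rfl, hl⟩ | ⟨s, l, l', i, c, rfl, rfl, hl'⟩ |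
      ⟨l, l', i, rfl, rfl, hl, hl'⟩
    · have h0 : l.1.length = 0 := by rw [hl]; rfl
      cases s <;> simp [h0] <;> omega
    · have hlen : l'.1.length = l.1.length + 1 := by rw [hl']; simp
      cases s <;> simp [hlen] <;> push_cast <;> omega
    · have h1 : l.1.length = t - 1 := by rw [hl]; simp
      have h2 : l'.1.length = t - 1 := by rw [hl']; simp
      simp [h1, h2]
      omega
  intro u v hadj
  rcases (tadj.mp hadj).2 with h | h
  · exact key u v h
  · exact (key v u h).symm

lemma hv_step (ht : 1 ≤ t) {u v : TVert t m} (hu : u ≠ Sum.inl false)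
    (hv' : v ≠ Sum.inl false) (hadj : (Tgraph t m).Adj u v) :
    hv t m u = hv t m v + 1 ∨ hv t m v = hv t m u + 1 := by
  have key : ∀ u v : TVert t m, u ≠ Sum.inl false → v ≠ Sum.inl false → TRel t m u v →
      hv t m u = hv t m v + 1 ∨ hv t m v = hv t m u + 1 := by
    intro u v hu hv' hrel
    rcases hrel with ⟨s, l, i, rfl, rfl, hl⟩ | ⟨s, l, l', i, c, rfl, rfl, hl'⟩ |
      ⟨l, l', i, rfl, rfl, hl, hl'⟩
    · cases s
      · exact absurd rfl hu
      · have h0 : l.1.length = 0 := by rw [hl]; rfl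
        simp [h0]
    · have hlen : l'.1.length = l.1.length + 1 := by rw [hl']; simp
      cases s
      · -- false side
        have hL : lead l.1 ≤ l.1.length := lead_le_length _
        have hL' : lead l'.1 < t := bt_lead_lt ht l'
        have happ : lead l'.1 =
            if lead l.1 < l.1.length then lead l.1 else l.1.length + lead [c] := by
          rw [hl', lead_append]
        by_cases hc : lead l.1 < l.1.length
        · simp only [hc, if_pos] at happ
          simp [hlen, happ]
          omega
        · cases c
          · -- appending a zero to an all-zero string
            have : lead [false] = 1 := rfl
            simp only [hc, if_neg] at happ
            rw [this] at happ
            simp [hlen, happ]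
            omega
          · have : lead [true] = 0 := rfl
            simp only [hc, if_neg] at happ
            rw [this] at happ
            simp [hlen, happ]
            omega
      · simp [hlen]
        push_cast
        omega
    · have h1 : l.1.length = t - 1 := by rw [hl]; simp
      have h2 : l'.1.length = t - 1 := by rw [hl']; simp
      have h3 : lead l'.1 = t - 1 := by rw [hl']; simp
      simp [h1, h2, h3]
      omega
  rcases (tadj.mp hadj).2 with h | h
  · exact key u v hu hv' h
  · exact (key v u hv' hu h).symm

end S9

namespace S9
variable {t m : ℕ}

lemma down_desc (ht : 1 ≤ t) {v u : TVert t m} (hadj : (Tgraph t m).Adj v u)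
    (hvy : v ≠ Sum.inl false) (huy : u ≠ Sum.inl false) (hlt : hv t m u < hv t m v) :
    (∃ b i, v = Sum.inr (true, b, i) ∧ b.1 = ([] : List Bool) ∧ u = Sum.inl true) ∨
    (∃ (b l : BT t) (i : ZMod m) (c : Bool), v = Sum.inr (true, b, i) ∧
      u = Sum.inr (true, l, i) ∧ b.1 = l.1 ++ [c]) ∨
    (∃ (b l : BT t) (i : ZMod m) (c : Bool), v = Sum.inr (false, b, i) ∧
      u = Sum.inr (false, l, i) ∧ b.1 = l.1 ++ [c] ∧ lead b.1 < b.1.length) ∨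
    (∃ (b l : BT t) (i : ZMod m), v = Sum.inr (false, b, i) ∧
      u = Sum.inr (false, l, i) ∧ l.1 = b.1 ++ [false] ∧ b.1.length ≤ lead b.1) ∨
    (∃ (b l : BT t) (i : ZMod m), v = Sum.inr (false, b, i) ∧ u = Sum.inr (true, l, i) ∧
      b.1 = List.replicate (t - 1) false ∧ l.1 = List.replicate (t - 1) false) := by
  rcases (tadj.mp hadj).2 with hrel | hrel
  · -- TRel v u
    rcases hrel with ⟨s, l, i, rfl, rfl, hl⟩ | ⟨s, l, l', i, c, rfl, rfl, hl'⟩ |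
      ⟨l, l', i, rfl, rfl, hl, hl'⟩
    · -- v = inl s, u = root : u is above v, contradiction
      cases s
      · exact absurd rfl hvy
      · exfalso
        have h0 : l.1.length = 0 := by rw [hl]; rfl
        simp [h0] at hlt
    · -- v = (s, l, i), u = (s, l ++ [c], i) : u is a child of v
      have hlen : l'.1.length = l.1.length + 1 := by rw [hl']; simp
      cases s
      · -- false side : child is below iff l is all zeros and c = false
        have hL : lead l.1 ≤ l.1.length := lead_le_length _
        have hL' : lead l'.1 < t := bt_lead_lt ht l'
        have happ : lead l'.1 =
            if lead l.1 < l.1.length then lead l.1 else l.1.length + lead [c] := by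
          rw [hl', lead_append]
        by_cases hc : lead l.1 < l.1.length
        · exfalso
          rw [if_pos hc] at happ
          simp only [hv_y, hlen, happ] at hlt
          push_cast at hlt
          omega
        · cases c
          · rw [if_neg hc] at happ
            have h1 : lead [false] = 1 := rfl
            rw [h1] at happ
            exact Or.inr (Or.inr (Or.inr (Or.inl ⟨l, l', i, rfl, rfl, hl', by omega⟩)))
          · exfalso
            rw [if_neg hc] at happ
            have h1 : lead [true] = 0 := rfl
            rw [h1] at happ
            simp [hlen, happ] at hlt
            omega
      · -- true side : child is above, contradiction
        exfalso
        simp only [hv_x, hlen] at hlt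
        push_cast at hlt
        omega
    · -- v = (true, a, i), u = (false, a, i) : cross partner is above, contradiction
      exfalso
      have h1 : l.1.length = t - 1 := by rw [hl]; simp
      have h2 : l'.1.length = t - 1 := by rw [hl']; simp
      have h3 : lead l'.1 = t - 1 := by rw [hl']; simp
      simp only [hv_x, hv_y, h1, h2, h3, min_self] at hlt
      omega
  · -- TRel u v
    rcases hrel with ⟨s, l, i, rfl, rfl, hl⟩ | ⟨s, l, l', i, c, rfl, rfl, hl'⟩ |
      ⟨l, l', i, rfl, rfl, hl, hl'⟩
    · cases s
      · exact absurd rfl huy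
      · exact Or.inl ⟨l, i, rfl, hl, rfl⟩
    · have hlen : l'.1.length = l.1.length + 1 := by rw [hl']; simp
      cases s
      · -- false side : parent is below iff l' is not all zeros
        have hL : lead l.1 ≤ l.1.length := lead_le_length _
        have hL' : lead l'.1 < t := bt_lead_lt ht l'
        have happ : lead l'.1 =
            if lead l.1 < l.1.length then lead l.1 else l.1.length + lead [c] := by
          rw [hl', lead_append]
        have hgoal : lead l'.1 < l'.1.length := by
          by_cases hc : lead l.1 < l.1.length
          · rw [if_pos hc] at happ
            omega
          · cases c
            · exfalso
              rw [if_neg hc] at happ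
              have h1 : lead [false] = 1 := rfl
              rw [h1] at happ
              simp [hlen, happ] at hlt
              omega
            · rw [if_neg hc] at happ
              have h1 : lead [true] = 0 := rfl
              rw [h1] at happ
              omega
        exact Or.inr (Or.inr (Or.inl ⟨l', l, i, c, rfl, rfl, hl', hgoal⟩))
      · exact Or.inr (Or.inl ⟨l', l, i, c, rfl, rfl, hl'⟩)
    · exact Or.inr (Or.inr (Or.inr (Or.inr ⟨l', l, i, rfl, rfl, hl', hl⟩)))

end S9

namespace S9
variable {t m : ℕ}

lemma app_single_inj {l1 l2 : List Bool} {c1 c2 : Bool} (h : l1 ++ [c1] = l2 ++ [c2]) :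
    l1 = l2 ∧ c1 = c2 := by
  have h2 := List.append_inj' h (by simp)
  refine ⟨h2.1, by simpa using h2.2⟩

lemma down_unique (ht : 1 ≤ t) {v u w : TVert t m}
    (h1 : (Tgraph t m).Adj v u) (h2 : (Tgraph t m).Adj v w)
    (hvy : v ≠ Sum.inl false) (huy : u ≠ Sum.inl false) (hwy : w ≠ Sum.inl false)
    (hl1 : hv t m u < hv t m v) (hl2 : hv t m w < hv t m v) : u = w := by
  rcases down_desc ht h1 hvy huy hl1 with
      ⟨b, i, rfl, hb, rfl⟩ | ⟨b, l, i, c, rfl, rfl, hb⟩ | ⟨b, l, i, c, rfl, rfl, hb, hld⟩ |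
      ⟨b, l, i, rfl, rfl, hb, hld⟩ | ⟨b, l, i, rfl, rfl, hb, hbl⟩
  · -- D1
    rcases down_desc ht h2 hvy hwy hl2 with
        ⟨b2, i2, heq, hb2, rfl⟩ | ⟨b2, ll2, i2, c2, heq, rfl, hb2⟩ |
        ⟨b2, ll2, i2, c2, heq, rfl, hb2, hld2⟩ | ⟨b2, ll2, i2, heq, rfl, hb2, hld2⟩ |
        ⟨b2, ll2, i2, heq, rfl, hb2, hbl2⟩
    · -- D1 E1
      obtain ⟨rfl, rfl⟩ : b2 = b ∧ i2 = i := by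
        injection heq with h9
        injection h9 with hs h9
        injection h9 with hb9 hi9
        exact ⟨hb9.symm, hi9.symm⟩
      rfl
    · -- D1 E2
      obtain ⟨rfl, rfl⟩ : b2 = b ∧ i2 = i := by
        injection heq with h9
        injection h9 with hs h9
        injection h9 with hb9 hi9
        exact ⟨hb9.symm, hi9.symm⟩
      exfalso; rw [hb] at hb2; simp at hb2
    · -- D1 E3
      exfalso
      injection heq with h9
      injection h9 with hs h9
      cases hs
    · -- D1 E4
      exfalso
      injection heq with h9
      injection h9 with hs h9
      cases hs
    · -- D1 E5
      exfalso
      injection heq with h9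
      injection h9 with hs h9
      cases hs
  · -- D2
    rcases down_desc ht h2 hvy hwy hl2 with
        ⟨b2, i2, heq, hb2, rfl⟩ | ⟨b2, ll2, i2, c2, heq, rfl, hb2⟩ |
        ⟨b2, ll2, i2, c2, heq, rfl, hb2, hld2⟩ | ⟨b2, ll2, i2, heq, rfl, hb2, hld2⟩ |
        ⟨b2, ll2, i2, heq, rfl, hb2, hbl2⟩
    · -- D2 E1
      obtain ⟨rfl, rfl⟩ : b2 = b ∧ i2 = i := by
        injection heq with h9
        injection h9 with hs h9
        injection h9 with hb9 hi9
        exact ⟨hb9.symm, hi9.symm⟩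
      exfalso; rw [hb2] at hb; simp at hb
    · -- D2 E2
      obtain ⟨rfl, rfl⟩ : b2 = b ∧ i2 = i := by
        injection heq with h9
        injection h9 with hs h9
        injection h9 with hb9 hi9
        exact ⟨hb9.symm, hi9.symm⟩
      obtain ⟨hl, -⟩ := app_single_inj (hb.symm.trans hb2)
      have h8 : l = ll2 := Subtype.ext hl
      rw [h8]
    · -- D2 E3
      exfalso
      injection heq with h9
      injection h9 with hs h9
      cases hs
    · -- D2 E4
      exfalso
      injection heq with h9
      injection h9 with hs h9
      cases hs
    · -- D2 E5
      exfalso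
      injection heq with h9
      injection h9 with hs h9
      cases hs
  · -- D3
    rcases down_desc ht h2 hvy hwy hl2 with
        ⟨b2, i2, heq, hb2, rfl⟩ | ⟨b2, ll2, i2, c2, heq, rfl, hb2⟩ |
        ⟨b2, ll2, i2, c2, heq, rfl, hb2, hld2⟩ | ⟨b2, ll2, i2, heq, rfl, hb2, hld2⟩ |
        ⟨b2, ll2, i2, heq, rfl, hb2, hbl2⟩
    · -- D3 E1
      exfalso
      injection heq with h9
      injection h9 with hs h9
      cases hs
    · -- D3 E2
      exfalso
      injection heq with h9
      injection h9 with hs h9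
      cases hs
    · -- D3 E3
      obtain ⟨rfl, rfl⟩ : b2 = b ∧ i2 = i := by
        injection heq with h9
        injection h9 with hs h9
        injection h9 with hb9 hi9
        exact ⟨hb9.symm, hi9.symm⟩
      obtain ⟨hl, -⟩ := app_single_inj (hb.symm.trans hb2)
      have h8 : l = ll2 := Subtype.ext hl
      rw [h8]
    · -- D3 E4
      obtain ⟨rfl, rfl⟩ : b2 = b ∧ i2 = i := by
        injection heq with h9
        injection h9 with hs h9
        injection h9 with hb9 hi9
        exact ⟨hb9.symm, hi9.symm⟩
      exfalso; omega
    · -- D3 E5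
      obtain ⟨rfl, rfl⟩ : b2 = b ∧ i2 = i := by
        injection heq with h9
        injection h9 with hs h9
        injection h9 with hb9 hi9
        exact ⟨hb9.symm, hi9.symm⟩
      exfalso; rw [hb2] at hld; simp at hld
  · -- D4
    rcases down_desc ht h2 hvy hwy hl2 with
        ⟨b2, i2, heq, hb2, rfl⟩ | ⟨b2, ll2, i2, c2, heq, rfl, hb2⟩ |
        ⟨b2, ll2, i2, c2, heq, rfl, hb2, hld2⟩ | ⟨b2, ll2, i2, heq, rfl, hb2, hld2⟩ |
        ⟨b2, ll2, i2, heq, rfl, hb2, hbl2⟩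
    · -- D4 E1
      exfalso
      injection heq with h9
      injection h9 with hs h9
      cases hs
    · -- D4 E2
      exfalso
      injection heq with h9
      injection h9 with hs h9
      cases hs
    · -- D4 E3
      obtain ⟨rfl, rfl⟩ : b2 = b ∧ i2 = i := by
        injection heq with h9
        injection h9 with hs h9
        injection h9 with hb9 hi9
        exact ⟨hb9.symm, hi9.symm⟩
      exfalso; omega
    · -- D4 E4
      obtain ⟨rfl, rfl⟩ : b2 = b ∧ i2 = i := by
        injection heq with h9
        injection h9 with hs h9
        injection h9 with hb9 hi9
        exact ⟨hb9.symm, hi9.symm⟩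
      have h8 : l = ll2 := Subtype.ext (hb.trans hb2.symm)
      rw [h8]
    · -- D4 E5
      obtain ⟨rfl, rfl⟩ : b2 = b ∧ i2 = i := by
        injection heq with h9
        injection h9 with hs h9
        injection h9 with hb9 hi9
        exact ⟨hb9.symm, hi9.symm⟩
      exfalso
      have h5 := bt_lead_lt ht l
      rw [hb, hb2, lead_append] at h5
      simp at h5
      omega
  · -- D5
    rcases down_desc ht h2 hvy hwy hl2 with
        ⟨b2, i2, heq, hb2, rfl⟩ | ⟨b2, ll2, i2, c2, heq, rfl, hb2⟩ |
        ⟨b2, ll2, i2, c2, heq, rfl, hb2, hld2⟩ | ⟨b2, ll2, i2, heq, rfl, hb2, hld2⟩ |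
        ⟨b2, ll2, i2, heq, rfl, hb2, hbl2⟩
    · -- D5 E1
      exfalso
      injection heq with h9
      injection h9 with hs h9
      cases hs
    · -- D5 E2
      exfalso
      injection heq with h9
      injection h9 with hs h9
      cases hs
    · -- D5 E3
      obtain ⟨rfl, rfl⟩ : b2 = b ∧ i2 = i := by
        injection heq with h9
        injection h9 with hs h9
        injection h9 with hb9 hi9
        exact ⟨hb9.symm, hi9.symm⟩
      exfalso; rw [hb] at hld2; simp at hld2
    · -- D5 E4
      obtain ⟨rfl, rfl⟩ : b2 = b ∧ i2 = i := by
        injection heq with h9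
        injection h9 with hs h9
        injection h9 with hb9 hi9
        exact ⟨hb9.symm, hi9.symm⟩
      exfalso
      have h5 := bt_lead_lt ht ll2
      rw [hb2, hb, lead_append] at h5
      simp at h5
      omega
    · -- D5 E5
      obtain ⟨rfl, rfl⟩ : b2 = b ∧ i2 = i := by
        injection heq with h9
        injection h9 with hs h9
        injection h9 with hb9 hi9
        exact ⟨hb9.symm, hi9.symm⟩
      have h8 : l = ll2 := Subtype.ext (hbl.trans hbl2.symm)
      rw [h8]

end S9

namespace S9
variable {t m : ℕ}

/-- `Tgraph` with the vertex `y* = Sum.inl false` (edge-)deleted. -/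
def Gd (t m : ℕ) : SimpleGraph (TVert t m) where
  Adj u v := (Tgraph t m).Adj u v ∧ u ≠ Sum.inl false ∧ v ≠ Sum.inl false
  symm := ⟨fun u v ⟨h, h1, h2⟩ => ⟨h.symm, h2, h1⟩⟩
  loopless := ⟨fun u ⟨h, _, _⟩ => (Tgraph t m).irrefl h⟩

lemma Gd_adj {u v : TVert t m} (h : (Gd t m).Adj u v) :
    (Tgraph t m).Adj u v ∧ u ≠ Sum.inl false ∧ v ≠ Sum.inl false := h

lemma Gd_no_cycle (ht : 1 ≤ t) : ∀ {v : TVert t m} (p : (Gd t m).Walk v v), ¬ p.IsCycle := by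
  intro v p hp
  refine no_cycle_of_height (G := Gd t m) (hv t m) ?_ ?_ p hp
  · intro a b h
    obtain ⟨h1, h2, h3⟩ := Gd_adj h
    exact hv_step ht h2 h3 h1
  · intro a b c h1 h2 hb hc
    obtain ⟨g1, g2, g3⟩ := Gd_adj h1
    obtain ⟨f1, f2, f3⟩ := Gd_adj h2
    exact down_unique ht g1 f1 g2 g3 f3 hb hc

/-- the side-swapping automorphism -/
def sw : TVert t m → TVert t m
  | Sum.inl s => Sum.inl (!s)
  | Sum.inr (s, b, i) => Sum.inr (!s, b, i)

lemma sw_sw (a : TVert t m) : sw (sw a) = a := by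
  cases a with
  | inl s => cases s <;> rfl
  | inr x => obtain ⟨s, b, i⟩ := x; cases s <;> rfl

lemma sw_injective : Function.Injective (sw : TVert t m → TVert t m) := by
  intro a b h
  rw [← sw_sw a, h, sw_sw]

lemma sw_adj {u v : TVert t m} (h : (Tgraph t m).Adj u v) :
    (Tgraph t m).Adj (sw u) (sw v) := by
  obtain ⟨hne, hrel⟩ := tadj.mp h
  refine tadj.mpr ⟨fun hh => hne (sw_injective hh), ?_⟩
  have key : ∀ a b : TVert t m, TRel t m a b → TRel t m (sw a) (sw b) ∨ TRel t m (sw b) (sw a) := by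
    intro a b hrel
    rcases hrel with ⟨s, l, i, rfl, rfl, hl⟩ | ⟨s, l, l', i, c, rfl, rfl, hl'⟩ |
      ⟨l, l', i, rfl, rfl, hl, hl'⟩
    · exact Or.inl (Or.inl ⟨!s, l, i, rfl, rfl, hl⟩)
    · exact Or.inl (Or.inr (Or.inl ⟨!s, l, l', i, c, rfl, rfl, hl'⟩))
    · exact Or.inr (Or.inr (Or.inr ⟨l', l, i, rfl, rfl, hl', hl⟩))
  rcases hrel with h' | h'
  · exact key u v h'
  · exact (key v u h').symm

def swHom (t m : ℕ) : Tgraph t m →g Tgraph t m where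
  toFun := sw
  map_rel' := sw_adj

/-- every cycle passes through `y*` -/
lemma ystar_mem_cycle (ht : 1 ≤ t) {a : TVert t m} {p : (Tgraph t m).Walk a a}
    (hp : p.IsCycle) : Sum.inl false ∈ p.support := by
  by_contra hy
  have hedge : ∀ e ∈ p.edges, e ∈ (Gd t m).edgeSet := by
    intro e he
    induction e with
    | h x y =>
      refine ⟨p.edges_subset_edgeSet he, ?_, ?_⟩
      · exact fun hh => hy (hh ▸ p.fst_mem_support_of_mem_edges he)
      · exact fun hh => hy (hh ▸ p.snd_mem_support_of_mem_edges he)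
  exact Gd_no_cycle ht _ (hp.transfer hedge)

/-- every cycle passes through `x*` -/
lemma xstar_mem_cycle (ht : 1 ≤ t) {a : TVert t m} {p : (Tgraph t m).Walk a a}
    (hp : p.IsCycle) : Sum.inl true ∈ p.support := by
  have hq : (p.map (swHom t m)).IsCycle := hp.map sw_injective
  have := ystar_mem_cycle ht hq
  rw [Walk.support_map] at this
  obtain ⟨x, hx, hxe⟩ := List.mem_map.mp this
  cases x with
  | inl s =>
    cases s
    · have h9 : (Sum.inl true : TVert t m) = Sum.inl false := hxe
      injection h9 with h9
      cases h9
    · exact hx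
  | inr y =>
    obtain ⟨s, b, i⟩ := y
    have h9 : (Sum.inr (!s, b, i) : TVert t m) = Sum.inl false := hxe
    exact (by cases h9)

end S9

namespace S9
variable {t m : ℕ}

lemma cycle_length_lower (ht : 1 ≤ t) {a : TVert t m} (p : (Tgraph t m).Walk a a)
    (hp : p.IsCycle) : 4 * t + 2 ≤ p.length := by
  classical
  have hx := xstar_mem_cycle ht hp
  have hq : (p.rotate _ hx).IsCycle := hp.rotate hx
  have hy := ystar_mem_cycle ht hq
  have hsplit := (p.rotate _ hx).take_spec hy
  have hlen : ((p.rotate _ hx).takeUntil _ hy).length + ((p.rotate _ hx).dropUntil _ hy).length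
      = (p.rotate _ hx).length := by
    have := congrArg Walk.length hsplit
    rwa [Walk.length_append] at this
  have hrotlen : (p.rotate _ hx).length = p.length := by
    have h1 := (p.rotate_darts _ hx).perm.length_eq
    rwa [Walk.length_darts, Walk.length_darts] at h1
  have e1 : |pv t m (Sum.inl true) - pv t m (Sum.inl false)| = 2 * (t : ℤ) + 1 := by
    simp only [pv_xs, pv_ys, zero_sub, abs_neg]
    rw [abs_of_nonneg (by positivity)]
  have l1 := length_ge_of_level (pv t m) (pv_step ht) ((p.rotate _ hx).takeUntil _ hy)
  have l2 := length_ge_of_level (pv t m) (pv_step ht) ((p.rotate _ hx).dropUntil _ hy)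
  rw [e1] at l1
  rw [abs_sub_comm, e1] at l2
  omega

end S9

namespace S9

lemma zmod_zero_ne_one {m : ℕ} (hm : 2 ≤ m) : (0 : ZMod m) ≠ 1 := by
  haveI : NeZero m := ⟨by omega⟩
  intro h
  have h2 : ((1 : ℕ) : ZMod m) = 0 := by exact_mod_cast h.symm
  rw [ZMod.natCast_eq_zero_iff] at h2
  have := Nat.le_of_dvd one_pos h2
  omega

section Construction

variable (t : ℕ) (ht : 1 ≤ t) (m : ℕ)

def zeros (k : ℕ) : BT t :=
  ⟨List.replicate (min k (t - 1)) false, by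
    constructor
    · simp; omega
    · rw [replicate_prefix_iff, lead_replicate]; omega⟩

lemma zeros_val (k : ℕ) (hk : k ≤ t - 1) :
    (zeros t ht k).1 = List.replicate k false := by
  simp [zeros, min_eq_left hk]

def vv (s : Bool) (k : ℕ) (i : ZMod m) : TVert t m := Sum.inr (s, zeros t ht k, i)

lemma vv_inj {s s' : Bool} {k k' : ℕ} {i i' : ZMod m} (hk : k ≤ t - 1) (hk' : k' ≤ t - 1)
    (h : vv t ht m s k i = vv t ht m s' k' i') : s = s' ∧ k = k' ∧ i = i' := by
  injection h with h
  injection h with hs h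
  injection h with hb hi
  refine ⟨hs, ?_, hi⟩
  have h2 : (zeros t ht k).1.length = (zeros t ht k').1.length := by rw [hb]
  rw [zeros_val t ht k hk, zeros_val t ht k' hk'] at h2
  simpa using h2

lemma adj_step (s : Bool) (i : ZMod m) (k : ℕ) (hk : k + 1 ≤ t - 1) :
    (Tgraph t m).Adj (vv t ht m s (k + 1) i) (vv t ht m s k i) := by
  refine tadj.mpr ⟨?_, Or.inr (Or.inr (Or.inl ⟨s, zeros t ht k, zeros t ht (k + 1), i, false, rfl, rfl, ?_⟩))⟩
  · intro h
    have := (vv_inj t ht m (by omega) (by omega) h).2.1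
    omega
  · rw [zeros_val t ht k (by omega), zeros_val t ht (k + 1) hk]
    exact List.replicate_succ'

lemma adj_root (i : ZMod m) : (Tgraph t m).Adj (Sum.inl true) (vv t ht m true 0 i) := by
  refine tadj.mpr ⟨fun h => (by cases h), Or.inl (Or.inl ⟨true, zeros t ht 0, i, rfl, rfl, ?_⟩)⟩
  rw [zeros_val t ht 0 (by omega)]
  rfl

lemma adj_rooty (i : ZMod m) : (Tgraph t m).Adj (vv t ht m false 0 i) (Sum.inl false) := by
  refine tadj.mpr ⟨fun h => (by cases h), Or.inr (Or.inl ⟨false, zeros t ht 0, i, rfl, rfl, ?_⟩)⟩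
  rw [zeros_val t ht 0 (by omega)]
  rfl

lemma adj_cross (i : ZMod m) :
    (Tgraph t m).Adj (vv t ht m true (t - 1) i) (vv t ht m false (t - 1) i) := by
  refine tadj.mpr ⟨?_, Or.inl (Or.inr (Or.inr ⟨zeros t ht (t - 1), zeros t ht (t - 1), i, rfl, rfl, ?_, ?_⟩))⟩
  · intro h
    have := (vv_inj t ht m le_rfl le_rfl h).1
    simp at this
  · exact zeros_val t ht (t - 1) le_rfl
  · exact zeros_val t ht (t - 1) le_rfl

def upW (s : Bool) (i : ZMod m) : (k : ℕ) → k + 1 ≤ t → (Tgraph t m).Walk (vv t ht m s k i) (vv t ht m s 0 i)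
  | 0, _ => Walk.nil
  | k + 1, hk => Walk.cons (adj_step t ht m s i k (by omega)) (upW s i k (by omega))

lemma upW_length (s : Bool) (i : ZMod m) : ∀ (k : ℕ) (hk : k + 1 ≤ t),
    (upW t ht m s i k hk).length = k
  | 0, _ => rfl
  | k + 1, hk => by
    show (upW t ht m s i k _).length + 1 = k + 1
    rw [upW_length s i k (by omega)]

lemma upW_support (s : Bool) (i : ZMod m) : ∀ (k : ℕ) (hk : k + 1 ≤ t),
    (upW t ht m s i k hk).support = (List.range (k + 1)).reverse.map (fun j => vv t ht m s j i)
  | 0, _ => rfl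
  | k + 1, hk => by
    show vv t ht m s (k + 1) i :: (upW t ht m s i k _).support = _
    rw [upW_support s i k (by omega)]
    rw [List.range_succ (n := k + 1), List.reverse_append]
    rfl

end Construction
end S9

namespace S9
section Construction2
variable (t : ℕ) (ht : 1 ≤ t) (m : ℕ)

def Mseg (s : Bool) (i : ZMod m) : List (TVert t m) :=
  (List.range t).map (fun j => vv t ht m s j i)

def Qw (i : ZMod m) : (Tgraph t m).Walk (vv t ht m true 0 i) (Sum.inl false) :=
  (upW t ht m true i (t - 1) (by omega)).reverse.append
    (Walk.cons (adj_cross t ht m i)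
      ((upW t ht m false i (t - 1) (by omega)).append
        (Walk.cons (adj_rooty t ht m i) Walk.nil)))

def Rw : (Tgraph t m).Walk (Sum.inl false) (Sum.inl true) :=
  Walk.cons (adj_rooty t ht m 1).symm
    ((upW t ht m false 1 (t - 1) (by omega)).reverse.append
      (Walk.cons (adj_cross t ht m 1).symm
        ((upW t ht m true 1 (t - 1) (by omega)).append
          (Walk.cons (adj_root t ht m 1).symm Walk.nil))))

def cyc : (Tgraph t m).Walk (Sum.inl true) (Sum.inl true) :=
  Walk.cons (adj_root t ht m 0) ((Qw t ht m 0).append (Rw t ht m))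

lemma Qw_length (i : ZMod m) : (Qw t ht m i).length = 2 * t := by
  simp [Qw, Walk.length_append, Walk.length_cons, Walk.length_reverse, upW_length]
  omega

lemma Rw_length : (Rw t ht m).length = 2 * t + 1 := by
  simp [Rw, Walk.length_append, Walk.length_cons, Walk.length_reverse, upW_length]
  omega

lemma cyc_length : (cyc t ht m).length = 4 * t + 2 := by
  simp [cyc, Walk.length_append, Walk.length_cons, Qw_length, Rw_length]
  omega

lemma Qw_support (i : ZMod m) : (Qw t ht m i).support =
    Mseg t ht m true i ++ ((Mseg t ht m false i).reverse ++ ([Sum.inl false] : List (TVert t m))) := by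
  have h1 : t - 1 + 1 = t := by omega
  simp only [Qw, Walk.support_append, Walk.support_reverse, Walk.support_cons,
    upW_support, Walk.support_nil, List.tail_cons, Mseg, h1]
  simp [List.map_reverse]

lemma Rw_support : (Rw t ht m).support =
    Sum.inl false :: (Mseg t ht m false 1 ++
      ((Mseg t ht m true 1).reverse ++ ([Sum.inl true] : List (TVert t m)))) := by
  have h1 : t - 1 + 1 = t := by omega
  simp only [Rw, Walk.support_append, Walk.support_reverse, Walk.support_cons,
    upW_support, Walk.support_nil, List.tail_cons, Mseg, h1]
  simp [List.map_reverse]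

end Construction2
end S9

namespace S9
section Construction3
variable (t : ℕ) (ht : 1 ≤ t) (m : ℕ)

lemma mem_Mseg {a : TVert t m} {s : Bool} {i : ZMod m} (h : a ∈ Mseg t ht m s i) :
    ∃ j, j < t ∧ a = vv t ht m s j i := by
  simp only [Mseg, List.mem_map, List.mem_range] at h
  obtain ⟨j, hj, rfl⟩ := h
  exact ⟨j, hj, rfl⟩

lemma Mseg_nodup (s : Bool) (i : ZMod m) : (Mseg t ht m s i).Nodup := by
  refine List.Nodup.map_on ?_ List.nodup_range
  intro x hx y hy hxy
  rw [List.mem_range] at hx hy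
  exact (vv_inj t ht m (by omega) (by omega) hxy).2.1

lemma inl_not_mem_Mseg (b : Bool) (s : Bool) (i : ZMod m) :
    Sum.inl b ∉ Mseg t ht m s i := by
  intro h
  obtain ⟨j, hj, he⟩ := mem_Mseg t ht m h
  exact (by cases he)

lemma rest_nodup (hm : 2 ≤ m) : ((Qw t ht m 0).append (Rw t ht m)).support.Nodup := by
  have h01 : (0 : ZMod m) ≠ 1 := zmod_zero_ne_one hm
  rw [Walk.support_append, Qw_support, Rw_support, List.tail_cons]
  refine List.Nodup.append
    (List.Nodup.append (Mseg_nodup t ht m true 0)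
      (List.Nodup.append (by simp [Mseg_nodup]) (List.nodup_singleton _) ?_) ?_)
    (List.Nodup.append (Mseg_nodup t ht m false 1)
      (List.Nodup.append (by simp [Mseg_nodup]) (List.nodup_singleton _) ?_) ?_) ?_
  · -- (Mseg false 0).reverse disjoint [inl false]
    intro a ha hb
    simp only [List.mem_singleton] at hb
    subst hb
    rw [List.mem_reverse] at ha
    exact inl_not_mem_Mseg t ht m false false 0 ha
  · -- Mseg true 0 disjoint (reverse ++ [inl false])
    intro a ha hb
    obtain ⟨j, hj, rfl⟩ := mem_Mseg t ht m ha
    rcases List.mem_append.mp hb with hb | hb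
    · rw [List.mem_reverse] at hb
      obtain ⟨j', hj', he⟩ := mem_Mseg t ht m hb
      have := (vv_inj t ht m (by omega) (by omega) he).1
      simp at this
    · simp only [List.mem_singleton] at hb
      exact (by cases hb)
  · -- (Mseg true 1).reverse disjoint [inl true]
    intro a ha hb
    simp only [List.mem_singleton] at hb
    subst hb
    rw [List.mem_reverse] at ha
    exact inl_not_mem_Mseg t ht m true true 1 ha
  · -- Mseg false 1 disjoint ((Mseg true 1).reverse ++ [inl true])
    intro a ha hb
    obtain ⟨j, hj, rfl⟩ := mem_Mseg t ht m ha
    rcases List.mem_append.mp hb with hb | hb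
    · rw [List.mem_reverse] at hb
      obtain ⟨j', hj', he⟩ := mem_Mseg t ht m hb
      have := (vv_inj t ht m (by omega) (by omega) he).1
      simp at this
    · simp only [List.mem_singleton] at hb
      exact (by cases hb)
  · -- first half disjoint from second half
    intro a ha hb
    have hmem1 : (∃ s j, j < t ∧ a = vv t ht m s j 0) ∨ a = Sum.inl false := by
      rcases List.mem_append.mp ha with ha | ha
      · obtain ⟨j, hj, rfl⟩ := mem_Mseg t ht m ha
        exact Or.inl ⟨true, j, hj, rfl⟩
      · rcases List.mem_append.mp ha with ha | ha
        · rw [List.mem_reverse] at ha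
          obtain ⟨j, hj, rfl⟩ := mem_Mseg t ht m ha
          exact Or.inl ⟨false, j, hj, rfl⟩
        · simp only [List.mem_singleton] at ha
          exact Or.inr ha
    have hmem2 : (∃ s j, j < t ∧ a = vv t ht m s j 1) ∨ a = Sum.inl true := by
      rcases List.mem_append.mp hb with hb | hb
      · obtain ⟨j, hj, rfl⟩ := mem_Mseg t ht m hb
        exact Or.inl ⟨false, j, hj, rfl⟩
      · rcases List.mem_append.mp hb with hb | hb
        · rw [List.mem_reverse] at hb
          obtain ⟨j, hj, rfl⟩ := mem_Mseg t ht m hb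
          exact Or.inl ⟨true, j, hj, rfl⟩
        · simp only [List.mem_singleton] at hb
          exact Or.inr hb
    rcases hmem1 with ⟨s, j, hj, rfl⟩ | rfl
    · rcases hmem2 with ⟨s', j', hj', he⟩ | he
      · exact h01 (vv_inj t ht m (by omega) (by omega) he).2.2
      · exact (by cases he)
    · rcases hmem2 with ⟨s', j', hj', he⟩ | he
      · exact (by cases he)
      · exact Bool.noConfusion (Sum.inl.inj he)

end Construction3
end S9

namespace S9
section Construction4
variable (t : ℕ) (ht : 1 ≤ t) (m : ℕ)

lemma inl_not_mem_upW_support (b s : Bool) (i : ZMod m) (k : ℕ) (hk : k + 1 ≤ t) :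
    Sum.inl b ∉ (upW t ht m s i k hk).support := by
  rw [upW_support]
  intro h
  simp only [List.mem_map] at h
  obtain ⟨j, _, he⟩ := h
  exact (by cases he)

lemma edge_not_mem (hm : 2 ≤ m) :
    s(Sum.inl true, vv t ht m true 0 0) ∉ ((Qw t ht m 0).append (Rw t ht m)).edges := by
  intro h
  rw [Walk.edges_append, List.mem_append] at h
  rcases h with h | h
  · have hx : (Sum.inl true : TVert t m) ∈ (Qw t ht m 0).support :=
      (Qw t ht m 0).fst_mem_support_of_mem_edges h
    rw [Qw_support] at hx
    rcases List.mem_append.mp hx with hx | hx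
    · exact inl_not_mem_Mseg t ht m true true 0 hx
    · rcases List.mem_append.mp hx with hx | hx
      · rw [List.mem_reverse] at hx
        exact inl_not_mem_Mseg t ht m true false 0 hx
      · simp only [List.mem_singleton] at hx
        exact Bool.noConfusion (Sum.inl.inj hx)
  · simp only [Rw, Walk.edges_cons, Walk.edges_append, List.mem_cons, List.mem_append] at h
    rcases h with h | h
    · rcases Sym2.eq_iff.mp h with ⟨h1, h2⟩ | ⟨h1, h2⟩
      · exact Bool.noConfusion (Sum.inl.inj h1)
      · exact (by cases h1)
    rcases h with h | h
    · have hx := (upW t ht m false 1 (t - 1) (by omega)).reverse.fst_mem_support_of_mem_edges h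
      rw [Walk.support_reverse, List.mem_reverse] at hx
      exact inl_not_mem_upW_support t ht m true false 1 (t - 1) (by omega) hx
    rcases h with h | h
    · rcases Sym2.eq_iff.mp h with ⟨h1, h2⟩ | ⟨h1, h2⟩
      · exact (by cases h1)
      · exact (by cases h1)
    rcases h with h | h
    · have hx := (upW t ht m true 1 (t - 1) (by omega)).fst_mem_support_of_mem_edges h
      exact inl_not_mem_upW_support t ht m true true 1 (t - 1) (by omega) hx
    · rcases h with h | h
      · rcases Sym2.eq_iff.mp h with ⟨h1, h2⟩ | ⟨h1, h2⟩
        · exact (by cases h1)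
        · exact zmod_zero_ne_one hm
            (vv_inj t ht m (Nat.zero_le _) (Nat.zero_le _) h2).2.2
      · simp at h

lemma cyc_isCycle (hm : 2 ≤ m) : (cyc t ht m).IsCycle := by
  rw [cyc, Walk.cons_isCycle_iff]
  refine ⟨?_, edge_not_mem t ht m hm⟩
  rw [Walk.isPath_def]
  exact rest_nodup t ht m hm

end Construction4
end S9

/-- for all integers `t ≥ 1` and `m ≥ 2`, the girth of `(T_{4t+2}; m)`
equals `4t + 2`. -/
theorem statement9 (t m : ℕ) (ht : 1 ≤ t) (hm : 2 ≤ m) :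
    (Tgraph t m).egirth = ((4 * t + 2 : ℕ) : ℕ∞) := by
  apply _root_.le_antisymm
  · have hc := S9.cyc_isCycle t ht m hm
    have h1 : (Tgraph t m).egirth ≤ ((S9.cyc t ht m).length : ℕ∞) := by
      rw [SimpleGraph.egirth]
      exact iInf_le_of_le _ (iInf_le_of_le (S9.cyc t ht m) (iInf_le_of_le hc le_rfl))
    rwa [S9.cyc_length t ht m] at h1
  · rw [SimpleGraph.le_egirth]
    intro a w hw
    exact_mod_cast S9.cycle_length_lower ht w hw
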